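/- Let u_T : ℝⁿ → ℝ be Lipschitz and set u_T^* := S_T^+(S_T^- u_T). Then u_T^* is a viscosity supersolution of the obstacle problem min{ v − u_T, −λₙ[D²v − [H_pp(Dv)]⁻¹/T] } = 0 on ℝⁿ; that is, for every C² function φ : ℝⁿ → ℝ and every x0 that is a local minimum of u_T^* − φ with u_T^*(x0) = φ(x0), one has φ(x0) ≥ u_T(x0) and D²φ(x0)(p, p) ≤ (1/T)·⟨[H_pp(∇φ(x0))]⁻¹ p, p⟩ for all p ∈ ℝⁿ. -/

import Mathlib

open scoped RealInnerProductSpace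
open Filter

noncomputable section

/-- `n`-dimensional Euclidean space. -/
abbrev Euc (n : ℕ) := EuclideanSpace ℝ (Fin n)

/-- A real-valued function on `ℝⁿ` is Lipschitz (with some constant). -/
def IsLip {n : ℕ} (f : Euc n → ℝ) : Prop := ∃ K : NNReal, LipschitzWith K f

/-- The Legendre transform `L(q) = sup_p (⟨q,p⟫ - H(p))`. -/
def legendre {n : ℕ} (H : Euc n → ℝ) (q : Euc n) : ℝ :=
  ⨆ p : Euc n, (⟪q, p⟫ - H p)

/-- The forward Hopf–Lax operator `(S_T^+ g)(x) = inf_y [g(y) + T·L((x-y)/T)]`. -/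
def Splus {n : ℕ} (T : ℝ) (L : Euc n → ℝ) (g : Euc n → ℝ) (x : Euc n) : ℝ :=
  ⨅ y : Euc n, (g y + T * L (T⁻¹ • (x - y)))

/-- The backward operator `(S_T^- g)(x) = sup_y [g(y) - T·L((y-x)/T)]`. -/
def Sminus {n : ℕ} (T : ℝ) (L : Euc n → ℝ) (g : Euc n → ℝ) (x : Euc n) : ℝ :=
  ⨆ y : Euc n, (g y - T * L (T⁻¹ • (y - x)))

/-- The Hessian of `H` is positive definite at every point. -/
def PosDefHessian {n : ℕ} (H : Euc n → ℝ) : Prop :=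
  ∀ p v : Euc n, v ≠ 0 → 0 < iteratedFDeriv ℝ 2 H p ![v, v]

/-- `H` is superlinear: `H(p)/‖p‖ → +∞` as `‖p‖ → +∞`. -/
def Superlinear {n : ℕ} (H : Euc n → ℝ) : Prop :=
  Tendsto (fun p : Euc n => H p / ‖p‖) (cocompact (Euc n)) atTop

/-- The Hessian of `H` at `q`, as a continuous linear operator: the derivative of the
gradient map `∇H` at `q`. -/
def hessOp {n : ℕ} (H : Euc n → ℝ) (q : Euc n) : Euc n →L[ℝ] Euc n :=
  fderiv ℝ (gradient H) q

section A
variable {n : ℕ} {H : Euc n → ℝ}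

lemma tendsto_pairing_atBot (hc : Continuous H) (hsl : Superlinear H) (q : Euc n) :
    Tendsto (fun p : Euc n => ⟪q, p⟫ - H p) (cocompact (Euc n)) atBot := by
  rw [tendsto_atBot]
  intro b
  have h1 : ∀ᶠ p : Euc n in cocompact _, ‖q‖ + |b| + 1 ≤ H p / ‖p‖ :=
    hsl.eventually (eventually_ge_atTop _)
  have h2 : ∀ᶠ p : Euc n in cocompact _, (1:ℝ) ≤ ‖p‖ :=
    tendsto_norm_cocompact_atTop.eventually (eventually_ge_atTop 1)
  filter_upwards [h1, h2] with p hp hnp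
  have hpos : (0:ℝ) < ‖p‖ := lt_of_lt_of_le one_pos hnp
  have hH : (‖q‖ + |b| + 1) * ‖p‖ ≤ H p := by
    rw [le_div_iff₀ hpos] at hp; linarith
  have hip : ⟪q, p⟫ ≤ ‖q‖ * ‖p‖ := real_inner_le_norm q p
  nlinarith [abs_nonneg b, neg_abs_le b, norm_nonneg q]

lemma legendre_exists_max (hc : Continuous H) (hsl : Superlinear H) (q : Euc n) :
    ∃ p0 : Euc n, ∀ p, ⟪q, p⟫ - H p ≤ ⟪q, p0⟫ - H p0 :=
  Continuous.exists_forall_ge ((continuous_const.inner continuous_id).sub hc)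
    (tendsto_pairing_atBot hc hsl q)

lemma bddAbove_pairing (hc : Continuous H) (hsl : Superlinear H) (q : Euc n) :
    BddAbove (Set.range fun p : Euc n => ⟪q, p⟫ - H p) := by
  obtain ⟨p0, hp0⟩ := legendre_exists_max hc hsl q
  exact ⟨_, Set.forall_mem_range.2 hp0⟩

lemma le_legendre (hc : Continuous H) (hsl : Superlinear H) (q p : Euc n) :
    ⟪q, p⟫ - H p ≤ legendre H q :=
  le_ciSup (bddAbove_pairing hc hsl q) p

lemma legendre_attained (hc : Continuous H) (hsl : Superlinear H) (q : Euc n) :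
    ∃ p0 : Euc n, legendre H q = ⟪q, p0⟫ - H p0 := by
  obtain ⟨p0, hp0⟩ := legendre_exists_max hc hsl q
  exact ⟨p0, le_antisymm (ciSup_le hp0) (le_legendre hc hsl q p0)⟩

lemma legendre_lower (hc : Continuous H) (hsl : Superlinear H) (a : ℝ) (ha : 0 ≤ a) :
    ∃ M : ℝ, ∀ q : Euc n, a * ‖q‖ - M ≤ legendre H q := by
  obtain ⟨z, _, hz⟩ := (isCompact_closedBall (0 : Euc n) a).exists_isMaxOn
    ⟨0, Metric.mem_closedBall_self ha⟩ hc.continuousOn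
  refine ⟨H z, fun q => ?_⟩
  rcases eq_or_ne q 0 with h | h
  · have := le_legendre hc hsl q (0 : Euc n)
    have h0 : H 0 ≤ H z := hz (Metric.mem_closedBall_self ha)
    simp only [h, inner_zero_right, norm_zero, mul_zero] at this ⊢
    linarith
  · set p : Euc n := (a * ‖q‖⁻¹) • q with hp
    have hnq : (0:ℝ) < ‖q‖ := norm_pos_iff.2 h
    have hip : ⟪q, p⟫ = a * ‖q‖ := by
      rw [hp, real_inner_smul_right, real_inner_self_eq_norm_sq]
      field_simp
    have hnp : ‖p‖ = a := by
      rw [hp, norm_smul]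
      simp [abs_of_nonneg, ha, mul_nonneg ha (inv_nonneg.2 hnq.le), abs_of_nonneg]
      field_simp
    have hHp : H p ≤ H z := hz (by simp [Metric.mem_closedBall, hnp])
    have := le_legendre hc hsl q p
    rw [hip] at this
    linarith
end A

section B
variable {n : ℕ} {H : Euc n → ℝ} {T : ℝ} {K : NNReal} {uT : Euc n → ℝ}

lemma lip_bound (hu : LipschitzWith K uT) (z y : Euc n) : uT z ≤ uT y + K * ‖z - y‖ := by
  have := hu.dist_le_mul z y
  rw [Real.dist_eq, dist_eq_norm] at this
  have h := le_of_abs_le this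
  linarith [h]

lemma sminus_term_le (hc : Continuous H) (hsl : Superlinear H) (hT : 0 < T)
    (hu : LipschitzWith K uT) :
    ∃ C : ℝ, ∀ y z : Euc n, uT z - T * legendre H (T⁻¹ • (z - y)) ≤ uT y + C := by
  obtain ⟨M, hM⟩ := legendre_lower (H := H) hc hsl K K.2
  refine ⟨T * M, fun y z => ?_⟩
  have h1 := hM (T⁻¹ • (z - y))
  have hn1 : ‖T⁻¹ • (z - y)‖ = T⁻¹ * ‖z - y‖ := by
    rw [norm_smul, Real.norm_eq_abs, abs_of_pos (inv_pos.2 hT)]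
  rw [hn1] at h1
  have h2 : (K : ℝ) * ‖z - y‖ - T * M ≤ T * legendre H (T⁻¹ • (z - y)) := by
    have := mul_le_mul_of_nonneg_left h1 hT.le
    calc (K : ℝ) * ‖z - y‖ - T * M = T * ((K : ℝ) * (T⁻¹ * ‖z - y‖) - M) := by
          field_simp
      _ ≤ T * legendre H (T⁻¹ • (z - y)) := this
  have h3 := lip_bound hu z y
  linarith

lemma sminus_bddAbove (hc : Continuous H) (hsl : Superlinear H) (hT : 0 < T)
    (hu : LipschitzWith K uT) (y : Euc n) :
    BddAbove (Set.range fun z : Euc n => uT z - T * legendre H (T⁻¹ • (z - y))) := by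
  obtain ⟨C, hC⟩ := sminus_term_le hc hsl hT hu
  exact ⟨uT y + C, Set.forall_mem_range.2 fun z => hC y z⟩

lemma le_sminus (hc : Continuous H) (hsl : Superlinear H) (hT : 0 < T)
    (hu : LipschitzWith K uT) (x y : Euc n) :
    uT x - T * legendre H (T⁻¹ • (x - y)) ≤ Sminus T (legendre H) uT y :=
  le_ciSup (sminus_bddAbove hc hsl hT hu y) x

lemma part1 (hc : Continuous H) (hsl : Superlinear H) (hT : 0 < T)
    (hu : LipschitzWith K uT) (x : Euc n) :
    uT x ≤ Splus T (legendre H) (Sminus T (legendre H) uT) x := by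
  refine le_ciInf fun y => ?_
  have := le_sminus hc hsl hT hu x y
  linarith

lemma sminus_lip (hc : Continuous H) (hsl : Superlinear H) (hT : 0 < T)
    (hu : LipschitzWith K uT) :
    LipschitzWith K (Sminus T (legendre H) uT) := by
  have key : ∀ y y' : Euc n,
      Sminus T (legendre H) uT y ≤ Sminus T (legendre H) uT y' + K * ‖y - y'‖ := by
    intro y y'
    refine ciSup_le fun z => ?_
    have h1 : uT z - T * legendre H (T⁻¹ • (z - y)) ≤
        (uT (z - y + y') - T * legendre H (T⁻¹ • ((z - y + y') - y'))) + K * ‖y - y'‖ := by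
      have hz : (z - y + y') - y' = z - y := by abel
      rw [hz]
      have := lip_bound hu z (z - y + y')
      have hnorm : z - (z - y + y') = y - y' := by abel
      calc uT z - T * legendre H (T⁻¹ • (z - y))
          ≤ (uT (z - y + y') + K * ‖z - (z - y + y')‖) - T * legendre H (T⁻¹ • (z - y)) := by
            linarith
        _ = (uT (z - y + y') - T * legendre H (T⁻¹ • (z - y))) + K * ‖y - y'‖ := by
            rw [hnorm]; ring
    exact h1.trans (by linarith [le_sminus hc hsl hT hu (z - y + y') y'])
  refine LipschitzWith.of_dist_le_mul fun y y' => ?_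
  rw [Real.dist_eq, abs_sub_le_iff]
  constructor
  · have := key y y'; rw [dist_eq_norm]; linarith
  · have := key y' y
    rw [dist_eq_norm, ← norm_neg (y - y')]
    have hn : -(y - y') = y' - y := by abel
    rw [hn]; linarith

lemma legendre_convex (hc : Continuous H) (hsl : Superlinear H) :
    ConvexOn ℝ (Set.univ : Set (Euc n)) (legendre H) := by
  refine ⟨convex_univ, fun q1 _ q2 _ a b ha hb hab => ?_⟩
  refine ciSup_le fun p => ?_
  have e : ⟪a • q1 + b • q2, p⟫ - H p
      = a * (⟪q1, p⟫ - H p) + b * (⟪q2, p⟫ - H p) := by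
    rw [inner_add_left, real_inner_smul_left, real_inner_smul_left]
    linear_combination (H p) * hab
  rw [e]
  have h1 : ⟪q1, p⟫ - H p ≤ legendre H q1 := le_legendre hc hsl q1 p
  have h2 : ⟪q2, p⟫ - H p ≤ legendre H q2 := le_legendre hc hsl q2 p
  have := add_le_add (mul_le_mul_of_nonneg_left h1 ha) (mul_le_mul_of_nonneg_left h2 hb)
  simpa [smul_eq_mul] using this

lemma legendre_cont (hc : Continuous H) (hsl : Superlinear H) :
    Continuous (legendre H) := by
  rw [← continuousOn_univ]
  exact (legendre_convex hc hsl).continuousOn isOpen_univ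
end B

section C
variable {n : ℕ} {H : Euc n → ℝ} {T : ℝ} {K : NNReal} {uT : Euc n → ℝ}

lemma splus_attained (hc : Continuous H) (hsl : Superlinear H) (hT : 0 < T)
    (hu : LipschitzWith K uT) (x : Euc n) :
    ∃ ystar : Euc n,
      (∀ y : Euc n, Sminus T (legendre H) uT ystar + T * legendre H (T⁻¹ • (x - ystar)) ≤
        Sminus T (legendre H) uT y + T * legendre H (T⁻¹ • (x - y))) ∧
      Splus T (legendre H) (Sminus T (legendre H) uT) x =
        Sminus T (legendre H) uT ystar + T * legendre H (T⁻¹ • (x - ystar)) := by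
  set w := Sminus T (legendre H) uT with hw
  set F : Euc n → ℝ := fun y => w y + T * legendre H (T⁻¹ • (x - y)) with hF
  have hwc : Continuous w := (sminus_lip hc hsl hT hu).continuous
  have hFc : Continuous F := by
    apply hwc.add
    exact continuous_const.mul ((legendre_cont hc hsl).comp
      (by fun_prop))
  obtain ⟨M, hM⟩ := legendre_lower (H := H) hc hsl ((K : ℝ) + 1) (by positivity)
  have hlower : ∀ y : Euc n, w x - (K : ℝ) * ‖y - x‖ + (((K : ℝ) + 1) * ‖x - y‖ - T * M) ≤ F y := by
    intro y
    have h1 : w x - (K : ℝ) * ‖y - x‖ ≤ w y := by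
      have := (sminus_lip hc hsl hT hu).dist_le_mul x y
      rw [Real.dist_eq, dist_eq_norm] at this
      have h := le_of_abs_le this
      have hxy : ‖x - y‖ = ‖y - x‖ := norm_sub_rev x y
      rw [hxy] at h; linarith
    have h2 : ((K : ℝ) + 1) * ‖x - y‖ - T * M ≤ T * legendre H (T⁻¹ • (x - y)) := by
      have h1' := hM (T⁻¹ • (x - y))
      have hn1 : ‖T⁻¹ • (x - y)‖ = T⁻¹ * ‖x - y‖ := by
        rw [norm_smul, Real.norm_eq_abs, abs_of_pos (inv_pos.2 hT)]
      rw [hn1] at h1'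
      have := mul_le_mul_of_nonneg_left h1' hT.le
      calc ((K : ℝ) + 1) * ‖x - y‖ - T * M
          = T * (((K : ℝ) + 1) * (T⁻¹ * ‖x - y‖) - M) := by field_simp
        _ ≤ T * legendre H (T⁻¹ • (x - y)) := this
    simp only [hF]
    linarith
  have htend : Tendsto F (cocompact (Euc n)) atTop := by
    have hg : Tendsto (fun y : Euc n => (w x - T * M - (K:ℝ) * ‖x‖ - ‖x‖) + ‖y‖)
        (cocompact (Euc n)) atTop :=
      tendsto_atTop_add_const_left _ _ tendsto_norm_cocompact_atTop
    apply tendsto_atTop_mono' (cocompact (Euc n)) ?_ hg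
    apply Eventually.of_forall
    intro y
    show w x - T * M - (K:ℝ) * ‖x‖ - ‖x‖ + ‖y‖ ≤ F y
    have := hlower y
    have hxy : ‖x - y‖ = ‖y - x‖ := norm_sub_rev x y
    have h3 : ‖y‖ - ‖x‖ ≤ ‖y - x‖ := by
      have := norm_sub_norm_le y x; linarith [this]
    have h4 : (0:ℝ) ≤ ‖y - x‖ := norm_nonneg _
    rw [hxy] at this
    have h5 : 0 ≤ (K:ℝ) * ‖x‖ := mul_nonneg (NNReal.coe_nonneg K) (norm_nonneg x)
    nlinarith [norm_nonneg x]
  obtain ⟨ystar, hstar⟩ := hFc.exists_forall_le htend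
  refine ⟨ystar, hstar, ?_⟩
  refine le_antisymm (ciInf_le ⟨F ystar, Set.forall_mem_range.2 hstar⟩ ystar) (le_ciInf hstar)

lemma gradient_eq_comp (hH : ContDiff ℝ 2 H) :
    gradient H = fun x => (InnerProductSpace.toDual ℝ (Euc n)).symm (fderiv ℝ H x) := rfl

lemma fderiv_fderiv_differentiable (hH : ContDiff ℝ 2 H) :
    Differentiable ℝ (fderiv ℝ H) :=
  (hH.fderiv_right (m := 1) le_rfl).differentiable one_ne_zero

lemma hessOp_inner (hH : ContDiff ℝ 2 H) (z v w : Euc n) :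
    ⟪hessOp H z v, w⟫ = fderiv ℝ (fderiv ℝ H) z v w := by
  have hdiff : DifferentiableAt ℝ (fderiv ℝ H) z := fderiv_fderiv_differentiable hH z
  have hc2 := LinearIsometryEquiv.comp_fderiv (𝕜 := ℝ) (f := fderiv ℝ H) (x := z)
    (InnerProductSpace.toDual ℝ (Euc n)).symm
  have hgr : gradient H = ⇑(InnerProductSpace.toDual ℝ (Euc n)).symm ∘ fderiv ℝ H := rfl
  have h2 : hessOp H z v
      = (InnerProductSpace.toDual ℝ (Euc n)).symm (fderiv ℝ (fderiv ℝ H) z v) := by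
    rw [hessOp, hgr, hc2]
    simp
  rw [h2]
  exact InnerProductSpace.toDual_symm_apply
end C

section D
variable {n : ℕ} {H : Euc n → ℝ}

lemma hessOp_form_pos (hH : ContDiff ℝ 2 H) (hpd : PosDefHessian H) (z : Euc n)
    {v : Euc n} (hv : v ≠ 0) : 0 < ⟪hessOp H z v, v⟫ := by
  have h := hpd z v hv
  rw [iteratedFDeriv_two_apply] at h
  simpa [hessOp_inner hH] using h

lemma hessOp_symm (hH : ContDiff ℝ 2 H) (z v w : Euc n) :
    ⟪hessOp H z v, w⟫ = ⟪hessOp H z w, v⟫ := by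
  rw [hessOp_inner hH, hessOp_inner hH]
  exact second_derivative_symmetric
    (fun y => ((hH.differentiable (by norm_num)) y).hasFDerivAt)
    ((fderiv_fderiv_differentiable hH z).hasFDerivAt) v w

lemma hessOp_continuous (hH : ContDiff ℝ 2 H) : Continuous (hessOp H) := by
  have hgrad : ContDiff ℝ 1 (gradient H) := by
    rw [gradient_eq_comp hH]
    exact ((InnerProductSpace.toDual ℝ (Euc n)).symm.contDiff).comp
      (hH.fderiv_right (m := 1) le_rfl)
  exact hgrad.continuous_fderiv one_ne_zero

lemma exists_unit_vector (hn : 0 < n) : ∃ v : Euc n, ‖v‖ = 1 := by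
  refine ⟨EuclideanSpace.single ⟨0, hn⟩ (1:ℝ), ?_⟩
  simp [EuclideanSpace.norm_single]

lemma posdef_min (hn : 0 < n) (A : Euc n →L[ℝ] Euc n)
    (hA : ∀ v : Euc n, v ≠ 0 → 0 < ⟪A v, v⟫) :
    ∃ lam : ℝ, 0 < lam ∧ ∀ v : Euc n, lam * ‖v‖ ^ 2 ≤ ⟪A v, v⟫ := by
  obtain ⟨v1, hv1⟩ := exists_unit_vector hn
  have hsph : (Metric.sphere (0 : Euc n) 1).Nonempty := ⟨v1, by simp [hv1]⟩
  have hccont : Continuous fun v : Euc n => ⟪A v, v⟫ :=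
    (A.continuous.inner continuous_id)
  obtain ⟨v0, hv0mem, hv0⟩ := (isCompact_sphere (0 : Euc n) 1).exists_isMinOn hsph
    hccont.continuousOn
  have hn0 : ‖v0‖ = 1 := by simpa using hv0mem
  have hv0ne : v0 ≠ 0 := by intro h; rw [h] at hn0; simp at hn0
  refine ⟨⟪A v0, v0⟫, hA v0 hv0ne, fun v => ?_⟩
  rcases eq_or_ne v 0 with rfl | hv
  · simp
  · have hnv : (0:ℝ) < ‖v‖ := norm_pos_iff.2 hv
    set u : Euc n := ‖v‖⁻¹ • v with hu
    have humem : u ∈ Metric.sphere (0 : Euc n) 1 := by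
      simp [hu, norm_smul, abs_of_pos (inv_pos.2 hnv), inv_mul_cancel₀ hnv.ne']
    have hmin : ⟪A v0, v0⟫ ≤ ⟪A u, u⟫ := hv0 humem
    set c : ℝ := ⟪A v, v⟫ with hcc
    have hexp : ⟪A u, u⟫ = ‖v‖⁻¹ * (‖v‖⁻¹ * c) := by
      rw [hu, map_smul, real_inner_smul_left, real_inner_smul_right]
    rw [hexp] at hmin
    have hid : (‖v‖⁻¹ * (‖v‖⁻¹ * c)) * ‖v‖ ^ 2 = c := by
      field_simp
    nlinarith [sq_nonneg ‖v‖]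

lemma isUnit_of_posdef (A : Euc n →L[ℝ] Euc n)
    (hA : ∀ v : Euc n, v ≠ 0 → 0 < ⟪A v, v⟫) : IsUnit A := by
  have hinj : Function.Injective A := by
    intro a b hab
    by_contra hne
    have h : a - b ≠ 0 := sub_ne_zero.2 hne
    have := hA (a - b) h
    rw [map_sub, hab, sub_self] at this
    simp at this
  have hbij : Function.Bijective (A : Euc n →ₗ[ℝ] Euc n) :=
    ⟨hinj, (LinearMap.injective_iff_surjective (f := (A : Euc n →ₗ[ℝ] Euc n))).1 hinj⟩
  let e : Euc n ≃ₗ[ℝ] Euc n := LinearEquiv.ofBijective _ hbij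
  let e' : Euc n ≃L[ℝ] Euc n := e.toContinuousLinearEquiv
  refine isUnit_iff_exists.2 ⟨e'.symm.toContinuousLinearMap, ?_, ?_⟩
  · refine ContinuousLinearMap.ext fun x => ?_
    simp only [ContinuousLinearMap.mul_apply, ContinuousLinearMap.one_apply]
    show A (e'.symm x) = x
    have h : A (e'.symm x) = e' (e'.symm x) := rfl
    rw [h, e'.apply_symm_apply]
  · refine ContinuousLinearMap.ext fun x => ?_
    simp only [ContinuousLinearMap.mul_apply, ContinuousLinearMap.one_apply]
    show e'.symm (A x) = x
    have h : A x = e' x := rfl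
    rw [h, e'.symm_apply_apply]

lemma inverse_apply_self (A : Euc n →L[ℝ] Euc n) (hA : IsUnit A) (s : Euc n) :
    A (Ring.inverse A s) = s := by
  have h := Ring.mul_inverse_cancel A hA
  have := DFunLike.congr_fun h s
  simpa [ContinuousLinearMap.mul_apply] using this

lemma quad_bound (S : Euc n →L[ℝ] Euc n)
    (hsymm : ∀ v w : Euc n, ⟪S v, w⟫ = ⟪S w, v⟫)
    (hpos : ∀ v : Euc n, 0 ≤ ⟪S v, v⟫) (hunit : IsUnit S) (s r : Euc n) :
    ⟪s, r⟫ - (1/2) * ⟪S r, r⟫ ≤ (1/2) * ⟪Ring.inverse S s, s⟫ := by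
  set i := Ring.inverse S s with hi
  have hSi : S i = s := inverse_apply_self S hunit s
  have h0 := hpos (r - i)
  have hexp : ⟪S (r - i), r - i⟫ = ⟪S r, r⟫ - 2 * ⟪s, r⟫ + ⟪i, s⟫ := by
    rw [map_sub, inner_sub_left, inner_sub_right, inner_sub_right]
    have h1 : ⟪S i, r⟫ = ⟪s, r⟫ := by rw [hSi]
    have h2 : ⟪S r, i⟫ = ⟪s, r⟫ := by rw [hsymm r i, hSi]
    have h3 : ⟪S i, i⟫ = ⟪i, s⟫ := by rw [hSi]; exact real_inner_comm i s
    linarith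
  rw [hexp] at h0
  linarith

lemma inverse_nonneg (S : Euc n →L[ℝ] Euc n)
    (hsymm : ∀ v w : Euc n, ⟪S v, w⟫ = ⟪S w, v⟫)
    (hpos : ∀ v : Euc n, 0 ≤ ⟪S v, v⟫) (hunit : IsUnit S) (s : Euc n) :
    0 ≤ ⟪Ring.inverse S s, s⟫ := by
  have hSi : S (Ring.inverse S s) = s := inverse_apply_self S hunit s
  have := hpos (Ring.inverse S s)
  rw [hSi] at this  -- careful: ⟪S i, i⟫ = ⟪s, i⟫
  calc (0:ℝ) ≤ ⟪s, Ring.inverse S s⟫ := this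
    _ = ⟪Ring.inverse S s, s⟫ := real_inner_comm _ _
end D

section E

lemma mono_aux {m m' : ℝ → ℝ} {a b : ℝ} (hab : a ≤ b)
    (hm : ∀ t, HasDerivAt m (m' t) t) (h0 : ∀ t ∈ Set.Icc a b, 0 ≤ m' t) :
    m a ≤ m b := by
  have hmono : MonotoneOn m (Set.Icc a b) := by
    apply monotoneOn_of_deriv_nonneg (convex_Icc a b)
    · exact fun t _ => (hm t).continuousAt.continuousWithinAt
    · intro t ht
      exact ((hm t).differentiableAt).differentiableWithinAt
    · intro t ht
      rw [(hm t).deriv]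
      exact h0 t (Set.mem_of_mem_of_subset ht (by rw [interior_Icc]; exact Set.Ioo_subset_Icc_self))
  exact hmono (Set.left_mem_Icc.2 hab) (Set.right_mem_Icc.2 hab) hab

lemma one_dim_lower {g g' g'' : ℝ → ℝ} {c : ℝ}
    (hg : ∀ t, HasDerivAt g (g' t) t) (hg' : ∀ t, HasDerivAt g' (g'' t) t)
    (hc : ∀ t ∈ Set.Icc (0:ℝ) 1, c ≤ g'' t) :
    g 0 + g' 0 + c / 2 ≤ g 1 := by
  set m : ℝ → ℝ := fun t => g t - g 0 - t * g' 0 - c * t ^ 2 / 2 with hm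
  set m' : ℝ → ℝ := fun t => g' t - g' 0 - c * t with hm'
  have hmd : ∀ t, HasDerivAt m (m' t) t := by
    intro t
    have h1 : HasDerivAt (fun t : ℝ => g t - g 0) (g' t) t := (hg t).sub_const _
    have h2 : HasDerivAt (fun t : ℝ => t * g' 0) (g' 0) t := by
      simpa using (hasDerivAt_id t).mul_const (g' 0)
    have h3 : HasDerivAt (fun t : ℝ => c * t ^ 2 / 2) (c * t) t := by
      have := ((hasDerivAt_pow 2 t).const_mul c).div_const 2
      simpa using this.congr_deriv (by push_cast; ring)
    exact (h1.sub h2).sub h3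
  have hmd' : ∀ t, HasDerivAt m' (g'' t - c) t := by
    intro t
    have h1 : HasDerivAt (fun t : ℝ => g' t - g' 0) (g'' t) t := (hg' t).sub_const _
    have h2 : HasDerivAt (fun t : ℝ => c * t) c t := by
      simpa using (hasDerivAt_id t).const_mul c
    exact h1.sub h2
  have hm'nonneg : ∀ t ∈ Set.Icc (0:ℝ) 1, 0 ≤ m' t := by
    intro t ht
    have h0 : m' 0 = 0 := by simp [hm']
    have := mono_aux (a := 0) (b := t) ht.1 hmd' ?_
    · rw [h0] at this; exact this
    · intro u hu
      have : u ∈ Set.Icc (0:ℝ) 1 := ⟨hu.1, hu.2.trans ht.2⟩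
      linarith [hc u this]
  have := mono_aux (a := 0) (b := 1) zero_le_one hmd hm'nonneg
  simp only [hm] at this
  norm_num at this
  linarith

lemma second_test {ψ ψ' : ℝ → ℝ} {d : ℝ}
    (h1 : ∀ t, HasDerivAt ψ (ψ' t) t) (h0 : ψ 0 = 0) (h0' : ψ' 0 = 0)
    (hd : HasDerivAt ψ' d 0) (hle : ∀ᶠ t in nhdsWithin (0:ℝ) (Set.Ioi 0), ψ t ≤ 0) :
    d ≤ 0 := by
  by_contra hdpos
  push_neg at hdpos
  have htend : Tendsto (slope ψ' 0) (nhdsWithin (0:ℝ) {(0:ℝ)}ᶜ) (nhds d) :=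
    hasDerivAt_iff_tendsto_slope.1 hd
  have h2 : Tendsto (slope ψ' 0) (nhdsWithin (0:ℝ) (Set.Ioi 0)) (nhds d) :=
    htend.mono_left (nhdsWithin_mono 0 (fun x hx => ne_of_gt hx))
  have h3 : ∀ᶠ t in nhdsWithin (0:ℝ) (Set.Ioi 0), 0 < slope ψ' 0 t :=
    h2.eventually (eventually_gt_nhds hdpos)
  have h4 : ∀ᶠ t in nhdsWithin (0:ℝ) (Set.Ioi 0), 0 < ψ' t := by
    filter_upwards [h3, self_mem_nhdsWithin] with t ht htmem
    have htpos : (0:ℝ) < t := htmem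
    have : slope ψ' 0 t = ψ' t / t := by
      rw [slope_def_field]; rw [h0']; simp
    rw [this] at ht
    exact (div_pos_iff.1 ht).resolve_right (fun h => absurd htpos (not_lt.2 h.2.le)) |>.1
  obtain ⟨e, he, hsub⟩ := mem_nhdsGT_iff_exists_Ioc_subset.1 ((hle.and h4).filter_mono le_rfl)
  have heps : (0:ℝ) < e := he
  have hmono : StrictMonoOn ψ (Set.Icc 0 e) := by
    apply strictMonoOn_of_deriv_pos (convex_Icc 0 e)
    · exact fun t _ => (h1 t).continuousAt.continuousWithinAt
    · intro t ht
      rw [interior_Icc] at ht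
      rw [(h1 t).deriv]
      exact (hsub ⟨ht.1, ht.2.le⟩).2
  have : ψ 0 < ψ e := hmono (Set.left_mem_Icc.2 heps.le) (Set.right_mem_Icc.2 heps.le) heps
  have hneg : ψ e ≤ 0 := (hsub ⟨heps, le_rfl⟩).1
  rw [h0] at this
  linarith
end E

set_option maxHeartbeats 1000000
section F
variable {n : ℕ} {H : Euc n → ℝ}

lemma line_deriv1 (hH : ContDiff ℝ 2 H) (p0 r : Euc n) (t : ℝ) :
    HasDerivAt (fun t : ℝ => H (p0 + t • r)) (fderiv ℝ H (p0 + t • r) r) t := by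
  have hline : HasDerivAt (fun t : ℝ => p0 + t • r) r t := by
    simpa using ((hasDerivAt_id t).smul_const r).const_add p0
  exact (((hH.differentiable (by norm_num)) (p0 + t • r)).hasFDerivAt).comp_hasDerivAt t hline

lemma line_deriv2 (hH : ContDiff ℝ 2 H) (p0 r : Euc n) (t : ℝ) :
    HasDerivAt (fun t : ℝ => fderiv ℝ H (p0 + t • r) r)
      ⟪hessOp H (p0 + t • r) r, r⟫ t := by
  have hline : HasDerivAt (fun t : ℝ => p0 + t • r) r t := by
    simpa using ((hasDerivAt_id t).smul_const r).const_add p0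
  have h1 : HasDerivAt (fun t : ℝ => fderiv ℝ H (p0 + t • r))
      (fderiv ℝ (fderiv ℝ H) (p0 + t • r) r) t :=
    ((fderiv_fderiv_differentiable hH (p0 + t • r)).hasFDerivAt).comp_hasDerivAt t hline
  have h2 := (ContinuousLinearMap.apply ℝ ℝ r).hasFDerivAt.comp_hasDerivAt t h1
  rw [hessOp_inner hH]
  simpa [Function.comp_def] using h2

lemma E_lower (hH : ContDiff ℝ 2 H) (p0 r : Euc n) {c : ℝ}
    (hc : ∀ t ∈ Set.Icc (0:ℝ) 1, c ≤ ⟪hessOp H (p0 + t • r) r, r⟫) :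
    H p0 + fderiv ℝ H p0 r + c / 2 ≤ H (p0 + r) := by
  have := one_dim_lower (g := fun t : ℝ => H (p0 + t • r))
    (g' := fun t : ℝ => fderiv ℝ H (p0 + t • r) r)
    (g'' := fun t : ℝ => ⟪hessOp H (p0 + t • r) r, r⟫)
    (line_deriv1 hH p0 r) (line_deriv2 hH p0 r) hc
  simpa using this

lemma E_pos (hH : ContDiff ℝ 2 H) (hpd : PosDefHessian H) (hc : Continuous H)
    (p0 : Euc n) {r : Euc n} (hr : r ≠ 0) :
    H p0 + fderiv ℝ H p0 r < H (p0 + r) := by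
  have hkc : Continuous fun t : ℝ => ⟪hessOp H (p0 + t • r) r, r⟫ := by
    apply Continuous.inner _ continuous_const
    exact ((hessOp_continuous hH).comp
      (continuous_const.add (continuous_id.smul continuous_const))).clm_apply continuous_const
  obtain ⟨t0, ht0mem, ht0⟩ := (isCompact_Icc (a := (0:ℝ)) (b := 1)).exists_isMinOn
    ⟨0, by norm_num⟩ hkc.continuousOn
  have hcpos : 0 < ⟪hessOp H (p0 + t0 • r) r, r⟫ := hessOp_form_pos hH hpd _ hr
  have := E_lower hH p0 r (c := ⟪hessOp H (p0 + t0 • r) r, r⟫) (fun t ht => ht0 ht)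
  linarith

lemma legendre_upper (hn : 0 < n) (hH : ContDiff ℝ 2 H) (hpd : PosDefHessian H)
    (hsl : Superlinear H) (hc : Continuous H) (qs ps : Euc n)
    (hmax : ∀ p : Euc n, ⟪qs, p⟫ - H p ≤ ⟪qs, ps⟫ - H ps)
    (B : Euc n →L[ℝ] Euc n) {ε : ℝ} (hε : 0 < ε)
    (hB : ∀ v : Euc n, B v = hessOp H ps v - ε • v)
    (hBpos : ∀ v : Euc n, v ≠ 0 → 0 < ⟪B v, v⟫) :
    ∃ δ : ℝ, 0 < δ ∧ ∀ s : Euc n, ‖s‖ ≤ δ →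
      legendre H (qs + s) ≤ legendre H qs + ⟪ps, s⟫ + (1/2) * ⟪Ring.inverse B s, s⟫ := by
  set A := hessOp H ps with hA
  -- first order condition
  have hgrad : ∀ r : Euc n, fderiv ℝ H ps r = ⟪qs, r⟫ := by
    have hloc : IsLocalMax (fun p : Euc n => ⟪qs, p⟫ - H p) ps :=
      (Filter.Eventually.of_forall hmax)
    have hder : HasFDerivAt (fun p : Euc n => ⟪qs, p⟫ - H p)
        (innerSL ℝ qs - fderiv ℝ H ps) ps := by
      exact ((innerSL ℝ qs).hasFDerivAt).sub ((hH.differentiable (by norm_num)) ps).hasFDerivAt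
    have h0 := hloc.hasFDerivAt_eq_zero hder
    intro r
    have := DFunLike.congr_fun h0 r
    simp only [ContinuousLinearMap.sub_apply, ContinuousLinearMap.zero_apply,
      innerSL_apply_apply] at this ⊢
    have h' : ⟪qs, r⟫ - fderiv ℝ H ps r = 0 := by
      simpa [innerSL] using this
    linarith
  have hEnonneg : ∀ r : Euc n, 0 ≤ H (ps + r) - H ps - ⟪qs, r⟫ := by
    intro r
    have := hmax (ps + r)
    rw [inner_add_right] at this
    linarith
  have hBsymm : ∀ v w : Euc n, ⟪B v, w⟫ = ⟪B w, v⟫ := by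
    intro v w
    rw [hB, hB, inner_sub_left, inner_sub_left, hessOp_symm hH, real_inner_smul_left,
      real_inner_smul_left, real_inner_comm v w]
  have hBpos' : ∀ v : Euc n, 0 ≤ ⟪B v, v⟫ := by
    intro v
    rcases eq_or_ne v 0 with rfl | hv
    · simp
    · exact (hBpos v hv).le
  have hBunit : IsUnit B := isUnit_of_posdef B hBpos
  have hBr : ∀ r : Euc n, ⟪B r, r⟫ = ⟪A r, r⟫ - ε * ‖r‖ ^ 2 := by
    intro r
    rw [hB, inner_sub_left, real_inner_smul_left, real_inner_self_eq_norm_sq]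
  -- choose ρ via continuity of hessOp
  obtain ⟨ρ', hρ', hcont⟩ := Metric.continuousAt_iff.1 ((hessOp_continuous hH).continuousAt
    (x := ps)) ε hε
  set ρ : ℝ := ρ' / 2 with hρdef
  have hρpos : 0 < ρ := by positivity
  have hball : ∀ z : Euc n, ‖z - ps‖ ≤ ρ → ‖hessOp H z - A‖ ≤ ε := by
    intro z hz
    have : dist z ps < ρ' := by
      rw [dist_eq_norm]; linarith
    have := hcont this
    rw [dist_eq_norm] at this
    exact this.le
  -- inner region bound
  have hinner : ∀ r : Euc n, ‖r‖ ≤ ρ → (1/2) * ⟪B r, r⟫ ≤ H (ps + r) - H ps - ⟪qs, r⟫ := by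
    intro r hr
    have hstep : ∀ t ∈ Set.Icc (0:ℝ) 1, ⟪B r, r⟫ ≤ ⟪hessOp H (ps + t • r) r, r⟫ := by
      intro t ht
      have hz : ‖(ps + t • r) - ps‖ ≤ ρ := by
        have : ps + t • r - ps = t • r := by abel
        rw [this, norm_smul, Real.norm_eq_abs, abs_of_nonneg ht.1]
        calc t * ‖r‖ ≤ 1 * ‖r‖ := by nlinarith [norm_nonneg r, ht.2]
          _ = ‖r‖ := one_mul _
          _ ≤ ρ := hr
      have hop := hball _ hz
      have hdiff : |⟪(hessOp H (ps + t • r) - A) r, r⟫| ≤ ε * ‖r‖ ^ 2 := by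
        calc |⟪(hessOp H (ps + t • r) - A) r, r⟫|
            ≤ ‖(hessOp H (ps + t • r) - A) r‖ * ‖r‖ := abs_real_inner_le_norm _ _
          _ ≤ (‖hessOp H (ps + t • r) - A‖ * ‖r‖) * ‖r‖ := by
              have := (hessOp H (ps + t • r) - A).le_opNorm r
              nlinarith [norm_nonneg r]
          _ ≤ (ε * ‖r‖) * ‖r‖ :=
              mul_le_mul_of_nonneg_right
                (mul_le_mul_of_nonneg_right hop (norm_nonneg r)) (norm_nonneg r)
          _ = ε * ‖r‖ ^ 2 := by ring
      have hexp : ⟪(hessOp H (ps + t • r) - A) r, r⟫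
          = ⟪hessOp H (ps + t • r) r, r⟫ - ⟪A r, r⟫ := by
        rw [ContinuousLinearMap.sub_apply, inner_sub_left]
      rw [hBr]
      have h1 := abs_le.1 hdiff
      rw [hexp] at h1
      linarith [h1.1]
    have := E_lower hH ps r hstep
    rw [hgrad r] at this
    linarith
  -- superlinear outside region
  obtain ⟨S, hScomp, hS⟩ := Filter.mem_cocompact.1
    ((hsl.eventually (eventually_ge_atTop (‖qs‖ + 2))).and
      (tendsto_norm_cocompact_atTop.eventually (eventually_ge_atTop 1)))
  obtain ⟨R, hR⟩ := hScomp.isBounded.subset_closedBall 0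
  set C1 : ℝ := (‖qs‖ + 2) * ‖ps‖ + |H ps| with hC1
  have hC1nonneg : 0 ≤ C1 := by positivity
  set ρ0 : ℝ := max (max ρ 1) (max (R + ‖ps‖ + 1) (C1 + 1)) with hρ0
  have hρ0ρ : ρ ≤ ρ0 := le_trans (le_max_left _ _) (le_max_left _ _)
  have hρ0pos : 0 < ρ0 := lt_of_lt_of_le hρpos hρ0ρ
  have houter : ∀ r : Euc n, ρ0 ≤ ‖r‖ → ∀ s : Euc n, ‖s‖ ≤ 1 →
      ⟪s, r⟫ - (H (ps + r) - H ps - ⟪qs, r⟫) ≤ 0 := by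
    intro r hrlarge s hs
    have hnotS : ps + r ∉ S := by
      intro hmem
      have := hR hmem
      rw [Metric.mem_closedBall, dist_zero_right] at this
      have h2 : ‖r‖ - ‖ps‖ ≤ ‖ps + r‖ := by
        have := norm_sub_norm_le r (-ps)
        simpa [norm_neg, sub_neg_eq_add, add_comm] using this
      have h3 : R + ‖ps‖ + 1 ≤ ρ0 := le_trans (le_max_left _ _) (le_max_right _ _)
      linarith
    have hSlin := hS hnotS
    have h1 : 1 ≤ ‖ps + r‖ := hSlin.2
    have h2 : (‖qs‖ + 2) * ‖ps + r‖ ≤ H (ps + r) := by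
      have := hSlin.1
      rw [le_div_iff₀ (lt_of_lt_of_le one_pos h1)] at this
      linarith
    have h3 : ‖r‖ - ‖ps‖ ≤ ‖ps + r‖ := by
      have := norm_sub_norm_le r (-ps)
      simpa [norm_neg, sub_neg_eq_add, add_comm] using this
    have h4 : ⟪qs, r⟫ ≤ ‖qs‖ * ‖r‖ := real_inner_le_norm qs r
    have h5 : ⟪s, r⟫ ≤ ‖r‖ := by
      have := real_inner_le_norm s r
      nlinarith [norm_nonneg r]
    have h6 : C1 + 1 ≤ ρ0 := le_trans (le_max_right _ _) (le_max_right _ _)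
    have habs : H ps ≤ |H ps| := le_abs_self _
    nlinarith [norm_nonneg qs, norm_nonneg ps, norm_nonneg r]
  -- annulus min
  have hAnnne : (Metric.sphere (0 : Euc n) ρ).Nonempty := by
    obtain ⟨v, hv⟩ := exists_unit_vector hn
    exact ⟨ρ • v, by simp [norm_smul, hv, abs_of_pos hρpos]⟩
  set Ann : Set (Euc n) := {r | ρ ≤ ‖r‖ ∧ ‖r‖ ≤ ρ0} with hAnn
  have hAnncomp : IsCompact Ann := by
    have hclosed : IsClosed Ann :=
      IsClosed.inter (isClosed_le continuous_const continuous_norm)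
        (isClosed_le continuous_norm continuous_const)
    apply Metric.isCompact_of_isClosed_isBounded hclosed
    apply Metric.isBounded_closedBall (x := (0 : Euc n)) (r := ρ0) |>.subset
    intro r hr
    rw [Metric.mem_closedBall, dist_zero_right]
    exact hr.2
  have hAnnnonempty : Ann.Nonempty := by
    obtain ⟨v, hv⟩ := hAnnne
    rw [mem_sphere_zero_iff_norm] at hv
    refine ⟨v, ?_, ?_⟩
    · rw [hv]
    · rw [hv]; exact hρ0ρ
  have hEcont : ContinuousOn (fun r : Euc n => H (ps + r) - H ps - ⟪qs, r⟫) Ann := by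
    apply Continuous.continuousOn
    exact ((hc.comp (continuous_const.add continuous_id)).sub continuous_const).sub
      (continuous_const.inner continuous_id)
  obtain ⟨r0, hr0mem, hr0⟩ := hAnncomp.exists_isMinOn hAnnnonempty hEcont
  set c2 : ℝ := H (ps + r0) - H ps - ⟪qs, r0⟫ with hc2
  have hc2pos : 0 < c2 := by
    have hr0ne : r0 ≠ 0 := by
      intro h
      have := hr0mem.1
      rw [h] at this
      simp at this
      linarith
    have := E_pos hH hpd hc ps hr0ne
    rw [hgrad r0] at this
    rw [hc2]; linarith
  -- final
  refine ⟨min 1 (c2 / ρ0), lt_min one_pos (div_pos hc2pos hρ0pos), fun s hs => ?_⟩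
  have hs1 : ‖s‖ ≤ 1 := hs.trans (min_le_left _ _)
  have hs2 : ‖s‖ ≤ c2 / ρ0 := hs.trans (min_le_right _ _)
  have hLqs : legendre H qs = ⟪qs, ps⟫ - H ps :=
    le_antisymm (ciSup_le hmax) (le_legendre hc hsl qs ps)
  refine ciSup_le fun p => ?_
  set r : Euc n := p - ps with hr
  have hp : p = ps + r := by rw [hr]; abel
  have halg : ⟪qs + s, p⟫ - H p
      = (⟪qs, ps⟫ - H ps) + ⟪ps, s⟫ + (⟪s, r⟫ - (H (ps + r) - H ps - ⟪qs, r⟫)) := by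
    rw [hp, inner_add_left, inner_add_right, inner_add_right]
    rw [real_inner_comm s ps]
    ring
  rw [halg, ← hLqs]
  have hQnonneg : 0 ≤ ⟪Ring.inverse B s, s⟫ := inverse_nonneg B hBsymm hBpos' hBunit s
  rcases le_or_gt ‖r‖ ρ with hcase | hcase
  · have h1 := hinner r hcase
    have h2 := quad_bound B hBsymm hBpos' hBunit s r
    linarith
  · rcases le_or_gt ‖r‖ ρ0 with hcase2 | hcase2
    · have hrAnn : r ∈ Ann := ⟨hcase.le, hcase2⟩
      have hE := hr0 hrAnn
      have hEr : c2 ≤ H (ps + r) - H ps - ⟪qs, r⟫ := hE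
      have hsr : ⟪s, r⟫ ≤ c2 := by
        have := real_inner_le_norm s r
        have h3 : ‖s‖ * ‖r‖ ≤ (c2 / ρ0) * ρ0 := by
          apply mul_le_mul hs2 hcase2 (norm_nonneg r) (div_nonneg hc2pos.le hρ0pos.le)
        have h4 : (c2 / ρ0) * ρ0 = c2 := div_mul_cancel₀ c2 hρ0pos.ne'
        linarith
      linarith
    · have := houter r hcase2.le s hs1
      linarith
end F

set_option maxHeartbeats 1600000 in
/-- `u_T^* := S_T^+(S_T^- u_T)` is a viscosity supersolution of the
obstacle problem `min{v - u_T, -λₙ[D²v - [H_pp(Dv)]⁻¹/T]} = 0`: for every `C²` test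
function `φ` touching `u_T^*` from below at a local minimum `x0` of `u_T^* - φ`, one has
`φ(x0) ≥ u_T(x0)` and `D²φ(x0)(p,p) ≤ (1/T)·⟨[H_pp(∇φ(x0))]⁻¹ p, p⟩` for all `p`. -/
theorem semiconcave_envelope_viscosity_supersolution
    {n : ℕ} (hn : 0 < n) (T : ℝ) (hT : 0 < T)
    (H : Euc n → ℝ) (hH : ContDiff ℝ 2 H)
    (hHconv : PosDefHessian H) (hHsuper : Superlinear H)
    (uT : Euc n → ℝ) (huT : IsLip uT) :
    ∀ φ : Euc n → ℝ, ContDiff ℝ 2 φ → ∀ x0 : Euc n,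
      IsLocalMin
        (fun x => Splus T (legendre H) (Sminus T (legendre H) uT) x - φ x) x0 →
      Splus T (legendre H) (Sminus T (legendre H) uT) x0 = φ x0 →
      uT x0 ≤ φ x0 ∧
        ∀ p : Euc n, iteratedFDeriv ℝ 2 φ x0 ![p, p] ≤
          (1 / T) * ⟪Ring.inverse (hessOp H (gradient φ x0)) p, p⟫ := by
  intro φ hφ x0 hmin heq
  obtain ⟨K, hu⟩ := huT
  have hc : Continuous H := hH.continuous
  set L : Euc n → ℝ := legendre H with hLdef
  set w : Euc n → ℝ := Sminus T L uT with hwdef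
  set ustar : Euc n → ℝ := Splus T L w with hustar
  constructor
  · have h2 : uT x0 ≤ ustar x0 := part1 hc hHsuper hT hu x0
    rwa [heq] at h2
  -- Part 2
  obtain ⟨ys, hysmin, hys⟩ := splus_attained hc hHsuper hT hu x0
  set qs : Euc n := T⁻¹ • (x0 - ys) with hqs
  obtain ⟨ps, hpsmax⟩ := legendre_exists_max hc hHsuper qs
  set A : Euc n →L[ℝ] Euc n := hessOp H ps with hAdef
  have hApos : ∀ v : Euc n, v ≠ 0 → 0 < ⟪A v, v⟫ := fun v hv => hessOp_form_pos hH hHconv ps hv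
  obtain ⟨lam, hlampos, hlam⟩ := posdef_min hn A hApos
  have hAunit : IsUnit A := isUnit_of_posdef A hApos
  -- upper envelope bound for ustar
  have hupper : ∀ x : Euc n, ustar x ≤ w ys + T * L (T⁻¹ • (x - ys)) := by
    intro x
    refine ciInf_le ⟨uT x, ?_⟩ ys
    rintro b ⟨y, rfl⟩
    have := le_sminus hc hHsuper hT hu x y
    simp only [← hwdef, ← hLdef]
    linarith
  have heqstar : ustar x0 = w ys + T * L qs := hys
  -- eventual bound on φ near x0, for each admissible ε
  have hkey : ∀ ε : ℝ, 0 < ε → ε < lam →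
      ∀ B : Euc n →L[ℝ] Euc n, (∀ v : Euc n, B v = A v - ε • v) →
      (∀ᶠ h in nhds (0 : Euc n),
        φ (x0 + h) - φ x0 - ⟪ps, h⟫ - (1 / (2 * T)) * ⟪Ring.inverse B h, h⟫ ≤ 0) ∧
      (∀ v w : Euc n, ⟪B v, w⟫ = ⟪B w, v⟫) ∧ (∀ v : Euc n, v ≠ 0 → 0 < ⟪B v, v⟫) := by
    intro ε hε0 hεlam B hB
    have hBpos : ∀ v : Euc n, v ≠ 0 → 0 < ⟪B v, v⟫ := by
      intro v hv
      have h1 : ⟪B v, v⟫ = ⟪A v, v⟫ - ε * ‖v‖ ^ 2 := by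
        rw [hB, inner_sub_left, real_inner_smul_left, real_inner_self_eq_norm_sq]
      have h2 := hlam v
      have h3 : 0 < ‖v‖ ^ 2 := pow_pos (norm_pos_iff.2 hv) 2
      rw [h1]
      nlinarith
    have hBsymm : ∀ v w : Euc n, ⟪B v, w⟫ = ⟪B w, v⟫ := by
      intro v w'
      rw [hB, hB, inner_sub_left, inner_sub_left, hessOp_symm hH, real_inner_smul_left,
        real_inner_smul_left, real_inner_comm v w']
    obtain ⟨δ, hδpos, hδ⟩ := legendre_upper hn hH hHconv hHsuper hc qs ps hpsmax B hε0 hB hBpos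
    refine ⟨?_, hBsymm, hBpos⟩
    have hmem : Metric.closedBall (0 : Euc n) (T * δ) ∈ nhds (0 : Euc n) :=
      Metric.closedBall_mem_nhds 0 (mul_pos hT hδpos)
    have hloc : ∀ᶠ h in nhds (0 : Euc n), φ (x0 + h) ≤ ustar (x0 + h) := by
      have hcont : Tendsto (fun h : Euc n => x0 + h) (nhds 0) (nhds x0) := by
        have hcn : Continuous (fun h : Euc n => x0 + h) :=
          continuous_const.add continuous_id
        have := hcn.tendsto (0 : Euc n)
        simpa using this
      filter_upwards [hcont.eventually hmin] with h hh
      have hh' : ustar x0 - φ x0 ≤ ustar (x0 + h) - φ (x0 + h) := hh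
      rw [heq] at hh'
      linarith
    filter_upwards [hmem, hloc] with h hball hphi
    rw [Metric.mem_closedBall, dist_zero_right] at hball
    have hsnorm : ‖T⁻¹ • h‖ ≤ δ := by
      rw [norm_smul, Real.norm_eq_abs, abs_of_pos (inv_pos.2 hT)]
      calc T⁻¹ * ‖h‖ ≤ T⁻¹ * (T * δ) :=
            mul_le_mul_of_nonneg_left hball (inv_pos.2 hT).le
        _ = δ := by field_simp
    have hsplit : T⁻¹ • (x0 + h - ys) = qs + T⁻¹ • h := by
      rw [hqs, ← smul_add]
      congr 1
      abel
    have h1 := hδ (T⁻¹ • h) hsnorm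
    have h2 := hupper (x0 + h)
    rw [hsplit] at h2
    have h3 : w ys + T * L (qs + T⁻¹ • h) ≤ w ys + T * (L qs + ⟪ps, T⁻¹ • h⟫
        + (1/2) * ⟪Ring.inverse B (T⁻¹ • h), T⁻¹ • h⟫) := by
      have := mul_le_mul_of_nonneg_left h1 hT.le
      linarith
    have h4 : Ring.inverse B (T⁻¹ • h) = T⁻¹ • (Ring.inverse B h) := map_smul _ _ _
    have h5 : ⟪Ring.inverse B (T⁻¹ • h), T⁻¹ • h⟫ = T⁻¹ * (T⁻¹ * ⟪Ring.inverse B h, h⟫) := by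
      rw [h4, real_inner_smul_left, real_inner_smul_right]
    have h6 : ⟪ps, T⁻¹ • h⟫ = T⁻¹ * ⟪ps, h⟫ := real_inner_smul_right _ _ _
    have halg : w ys + T * (L qs + ⟪ps, T⁻¹ • h⟫
        + (1/2) * ⟪Ring.inverse B (T⁻¹ • h), T⁻¹ • h⟫)
        = (w ys + T * L qs) + ⟪ps, h⟫ + (1 / (2 * T)) * ⟪Ring.inverse B h, h⟫ := by
      rw [h5, h6]
      field_simp
      ring
    rw [halg] at h3
    rw [← heqstar] at h3
    linarith
  -- gradient identification
  set ε0 : ℝ := lam / 2 with hε0def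
  have hε0pos : 0 < ε0 := by positivity
  have hε0lt : ε0 < lam := by rw [hε0def]; linarith
  set B0 : Euc n →L[ℝ] Euc n := A - ε0 • (1 : Euc n →L[ℝ] Euc n) with hB0
  have hB0v : ∀ v : Euc n, B0 v = A v - ε0 • v := by
    intro v
    rw [hB0]
    rfl
  obtain ⟨hbound0, hB0symm, hB0pos⟩ := hkey ε0 hε0pos hε0lt B0 hB0v
  have hgradphi : ∀ v : Euc n, fderiv ℝ φ x0 v = ⟪ps, v⟫ := by
    intro v
    have hξle : ∀ᶠ t in nhds (0 : ℝ),
        (fun t : ℝ => φ (x0 + t • v) - φ x0 - ⟪ps, t • v⟫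
          - (1 / (2 * T)) * ⟪Ring.inverse B0 (t • v), t • v⟫) t ≤ 0 := by
      have hcont : Tendsto (fun t : ℝ => t • v) (nhds 0) (nhds (0 : Euc n)) := by
        have := (by fun_prop :
          Continuous fun t : ℝ => t • v).tendsto (0 : ℝ)
        simpa using this
      filter_upwards [hcont.eventually hbound0] with t ht
      exact ht
    have hξmax : IsLocalMax (fun t : ℝ => φ (x0 + t • v) - φ x0 - ⟪ps, t • v⟫
        - (1 / (2 * T)) * ⟪Ring.inverse B0 (t • v), t • v⟫) 0 := by
      apply Filter.Eventually.mono hξle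
      intro t ht
      simpa using ht
    have hder : HasDerivAt (fun t : ℝ => φ (x0 + t • v) - φ x0 - ⟪ps, t • v⟫
        - (1 / (2 * T)) * ⟪Ring.inverse B0 (t • v), t • v⟫)
        (fderiv ℝ φ x0 v - ⟪ps, v⟫) 0 := by
      have hd1 : HasDerivAt (fun t : ℝ => φ (x0 + t • v)) (fderiv ℝ φ (x0 + (0:ℝ) • v) v) 0 :=
        line_deriv1 hφ x0 v 0
      have hd2 : HasDerivAt (fun t : ℝ => ⟪ps, t • v⟫) ⟪ps, v⟫ 0 := by
        have : (fun t : ℝ => ⟪ps, t • v⟫) = fun t : ℝ => t * ⟪ps, v⟫ := by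
          funext t; rw [real_inner_smul_right]
        rw [this]
        simpa using (hasDerivAt_id (0:ℝ)).mul_const ⟪ps, v⟫
      have hd3 : HasDerivAt (fun t : ℝ =>
          (1 / (2 * T)) * ⟪Ring.inverse B0 (t • v), t • v⟫) 0 0 := by
        have heq3 : (fun t : ℝ => (1 / (2 * T)) * ⟪Ring.inverse B0 (t • v), t • v⟫)
            = fun t : ℝ => ((1 / (2 * T)) * ⟪Ring.inverse B0 v, v⟫) * t ^ 2 := by
          funext t
          rw [map_smul, real_inner_smul_left, real_inner_smul_right]
          ring
        rw [heq3]
        have := ((hasDerivAt_pow 2 (0:ℝ)).const_mul ((1 / (2 * T)) * ⟪Ring.inverse B0 v, v⟫))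
        simpa using this
      have := ((hd1.sub_const (φ x0)).sub hd2).sub hd3
      simp only [zero_smul, add_zero] at this
      simpa [Pi.sub_def] using this
    have h0 := hξmax.hasDerivAt_eq_zero hder
    linarith [h0]
  have hgrad : gradient φ x0 = ps := by
    have hfd : ∀ v : Euc n, ⟪gradient φ x0, v⟫ = ⟪ps, v⟫ := by
      intro v
      rw [gradient]
      rw [InnerProductSpace.toDual_symm_apply]
      exact hgradphi v
    have : ∀ v : Euc n, ⟪gradient φ x0 - ps, v⟫ = 0 := by
      intro v
      rw [inner_sub_left, hfd v, sub_self]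
    have h2 := this (gradient φ x0 - ps)
    rw [inner_self_eq_zero] at h2
    have := sub_eq_zero.1 h2
    exact this
  -- second order bound for each ε
  intro p
  have hsecond : ∀ ε : ℝ, 0 < ε → ε < lam →
      iteratedFDeriv ℝ 2 φ x0 ![p, p] ≤
        (1 / T) * ⟪Ring.inverse (A - ε • (1 : Euc n →L[ℝ] Euc n)) p, p⟫ := by
    intro ε hε0 hεlam
    set B : Euc n →L[ℝ] Euc n := A - ε • (1 : Euc n →L[ℝ] Euc n) with hBdef
    have hBv : ∀ v : Euc n, B v = A v - ε • v := fun v => rfl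
    obtain ⟨hbound, hBsymm, hBpos⟩ := hkey ε hε0 hεlam B hBv
    set c : ℝ := ⟪Ring.inverse B p, p⟫ with hcdef
    set ψ : ℝ → ℝ := fun t => φ (x0 + t • p) - φ x0 - t * ⟪ps, p⟫ - (1 / (2 * T)) * c * t ^ 2
      with hψdef
    set ψ' : ℝ → ℝ := fun t => fderiv ℝ φ (x0 + t • p) p - ⟪ps, p⟫ - (1 / T) * c * t with hψ'def
    have hψd : ∀ t : ℝ, HasDerivAt ψ (ψ' t) t := by
      intro t
      have hd1 := line_deriv1 hφ x0 p t
      have hd2 : HasDerivAt (fun t : ℝ => t * ⟪ps, p⟫) ⟪ps, p⟫ t := by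
        simpa using (hasDerivAt_id t).mul_const ⟪ps, p⟫
      have hd3 : HasDerivAt (fun t : ℝ => (1 / (2 * T)) * c * t ^ 2)
          ((1 / T) * c * t) t := by
        have h := (hasDerivAt_pow 2 t).const_mul ((1 / (2 * T)) * c)
        refine h.congr_deriv ?_
        ring
      simpa [hψdef, hψ'def, Pi.sub_def] using (hd1.sub_const (φ x0)).sub hd2 |>.sub hd3
    have hψ'd : HasDerivAt ψ' (⟪hessOp φ x0 p, p⟫ - (1 / T) * c) 0 := by
      have hd1 := line_deriv2 hφ x0 p 0
      simp only [zero_smul, add_zero] at hd1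
      have hd2 : HasDerivAt (fun t : ℝ => (1 / T) * c * t) ((1 / T) * c) 0 := by
        simpa using (hasDerivAt_id (0:ℝ)).const_mul ((1 / T) * c)
      have := (hd1.sub_const ⟪ps, p⟫).sub hd2
      simpa [hψ'def, Pi.sub_def] using this
    have hψ0 : ψ 0 = 0 := by simp [hψdef]
    have hψ'0 : ψ' 0 = 0 := by
      simp only [hψ'def, zero_smul, add_zero, mul_zero]
      rw [hgradphi p]
      ring
    have hψle : ∀ᶠ t in nhdsWithin (0:ℝ) (Set.Ioi 0), ψ t ≤ 0 := by
      apply Filter.Eventually.filter_mono nhdsWithin_le_nhds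
      have hcont : Tendsto (fun t : ℝ => t • p) (nhds 0) (nhds (0 : Euc n)) := by
        have := (by fun_prop :
          Continuous fun t : ℝ => t • p).tendsto (0 : ℝ)
        simpa using this
      filter_upwards [hcont.eventually hbound] with t ht
      have halg : φ (x0 + t • p) - φ x0 - ⟪ps, t • p⟫
          - (1 / (2 * T)) * ⟪Ring.inverse B (t • p), t • p⟫ = ψ t := by
        rw [hψdef]
        simp only
        rw [map_smul, real_inner_smul_left, real_inner_smul_right, real_inner_smul_right]
        ring
      rw [halg] at ht
      exact ht
    have hd := second_test hψd hψ0 hψ'0 hψ'd hψle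
    have hiter : iteratedFDeriv ℝ 2 φ x0 ![p, p] = ⟪hessOp φ x0 p, p⟫ := by
      rw [iteratedFDeriv_two_apply, hessOp_inner hφ]
      simp
    rw [hiter]
    linarith
  -- limit ε → 0
  have htendB : Tendsto (fun ε : ℝ => (1 / T) * ⟪Ring.inverse
      (A - ε • (1 : Euc n →L[ℝ] Euc n)) p, p⟫) (nhdsWithin 0 (Set.Ioi 0))
      (nhds ((1 / T) * ⟪Ring.inverse A p, p⟫)) := by
    have hc1 : Continuous (fun ε : ℝ => A - ε • (1 : Euc n →L[ℝ] Euc n)) :=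
      continuous_const.sub (continuous_id.smul continuous_const)
    have hc2 : ContinuousAt (Ring.inverse : (Euc n →L[ℝ] Euc n) → (Euc n →L[ℝ] Euc n)) A := by
      have := NormedRing.inverse_continuousAt hAunit.unit
      rwa [hAunit.unit_spec] at this
    have hc3 : ContinuousAt (fun M : Euc n →L[ℝ] Euc n => (1 / T) * ⟪M p, p⟫)
        (Ring.inverse A) :=
      (continuous_const.mul ((continuous_id.clm_apply continuous_const).inner
        continuous_const)).continuousAt
    have h4 : Tendsto (fun ε : ℝ => A - ε • (1 : Euc n →L[ℝ] Euc n)) (nhds 0) (nhds A) := by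
      have h5 := hc1.tendsto (0 : ℝ)
      have h6 : A - (0:ℝ) • (1 : Euc n →L[ℝ] Euc n) = A := by
        have h7 : ((0:ℝ) • (1 : Euc n →L[ℝ] Euc n)) = 0 :=
          ContinuousLinearMap.ext fun v => by simp [ContinuousLinearMap.smul_apply]
        rw [h7, sub_zero]
      rwa [h6] at h5
    exact ((hc3.tendsto.comp hc2.tendsto).comp (h4.mono_left nhdsWithin_le_nhds))
  have hev : ∀ᶠ ε in nhdsWithin (0:ℝ) (Set.Ioi 0),
      iteratedFDeriv ℝ 2 φ x0 ![p, p] ≤ (1 / T) * ⟪Ring.inverse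
        (A - ε • (1 : Euc n →L[ℝ] Euc n)) p, p⟫ := by
    filter_upwards [Ioo_mem_nhdsGT_of_mem (Set.mem_Ico.2 ⟨le_rfl, hlampos⟩)] with ε hε
    exact hsecond ε hε.1 hε.2
  have hlim := ge_of_tendsto htendB hev
  rw [hgrad]
  exact hlim
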